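/- Let X be a separable real Banach space, q ∈ [1,∞), and suppose X has property (m_q*). Then for every ε ∈ (0,2), s_ε B_{X*} ⊆ (1 − (ε/2)^q)^{1/q} · B_{X*}, i.e. every x* ∈ s_ε B_{X*} satisfies ‖x*‖ ≤ (1 − (ε/2)^q)^{1/q}. -/

import Mathlib

open Filter Topology Metric

/-- The ε-Szlenk derivation of the closed dual unit ball of `X`. -/
def szlenkDeriv (X : Type*) [NormedAddCommGroup X] [NormedSpace ℝ X] (ε : ℝ) :
    Set (StrongDual ℝ X) :=
  {x : StrongDual ℝ X | ‖x‖ ≤ 1 ∧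
    ∀ V : Set (StrongDual ℝ X),
      IsOpen ((StrongDual.toWeakDual '' V : Set (WeakDual ℝ X))) → x ∈ V →
        ε < Metric.diam (Metric.closedBall (0 : StrongDual ℝ X) 1 ∩ V)}

/-- A sequence in the dual is weak*-null if it tends to `0` in the weak* topology. -/
def WeakStarNull {X : Type*} [NormedAddCommGroup X] [NormedSpace ℝ X]
    (u : ℕ → StrongDual ℝ X) : Prop :=
  Filter.Tendsto (fun n => StrongDual.toWeakDual (u n)) Filter.atTop
    (nhds (0 : WeakDual ℝ X))


/-- Kalton–Werner property (m_q*). -/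
def PropmqStar (X : Type*) [NormedAddCommGroup X] [NormedSpace ℝ X] (q : ℝ) : Prop :=
  ∀ x : StrongDual ℝ X, ∀ u : ℕ → StrongDual ℝ X, WeakStarNull u →
    Filter.limsup (fun n => ‖x + u n‖) Filter.atTop
      = (‖x‖ ^ q + (Filter.limsup (fun n => ‖u n‖) Filter.atTop) ^ q) ^ (1 / q)

theorem szlenkDeriv_subset_ball_of_propmqStar (X : Type*) [NormedAddCommGroup X]
    [NormedSpace ℝ X] [CompleteSpace X] [TopologicalSpace.SeparableSpace X]
    (q : ℝ) (hq : 1 ≤ q) (hmq : PropmqStar X q) (ε : ℝ) (hε : ε ∈ Set.Ioo (0 : ℝ) 2) :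
    ∀ x ∈ szlenkDeriv X ε, ‖x‖ ≤ (1 - (ε / 2) ^ q) ^ (1 / q) := by
  classical
  intro x hx
  obtain ⟨hx1, hV⟩ := hx
  obtain ⟨ε0, ε2⟩ := hε
  have hq0 : (0 : ℝ) < q := lt_of_lt_of_le one_pos hq
  obtain ⟨xs, hxs⟩ := TopologicalSpace.exists_dense_seq X
  -- Step 1: for each n, find a point of the ball, weak*-close to x on xs 0,…,xs n,
  -- but norm-far from x.
  have key : ∀ n : ℕ, ∃ w : StrongDual ℝ X, ‖w‖ ≤ 1 ∧ ε / 2 ≤ ‖w - x‖ ∧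
      ∀ k ≤ n, |w (xs k) - x (xs k)| < 1 / (n + 1) := by
    intro n
    set W : Set (WeakDual ℝ X) :=
      ⋂ k ∈ Finset.range (n + 1),
        {y : WeakDual ℝ X | |y (xs k) - x (xs k)| < 1 / (n + 1)} with hW
    have hWopen : IsOpen W := by
      apply isOpen_biInter_finset
      intro k _
      exact isOpen_lt (((WeakDual.eval_continuous (xs k)).sub continuous_const).abs)
        continuous_const
    set V : Set (StrongDual ℝ X) := StrongDual.toWeakDual ⁻¹' W with hVdef
    have himg : StrongDual.toWeakDual '' V = W :=
      Set.image_preimage_eq W (StrongDual.toWeakDual.surjective)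
    have hxV : x ∈ V := by
      simp only [hVdef, hW, Set.mem_preimage, Set.mem_iInter, Set.mem_setOf_eq]
      intro k _
      simp only [StrongDual.coe_toWeakDual, sub_self, abs_zero]
      positivity
    have hdiam := hV V (by rw [himg]; exact hWopen) hxV
    have h2 : ∃ a ∈ Metric.closedBall (0 : StrongDual ℝ X) 1 ∩ V,
        ∃ b ∈ Metric.closedBall (0 : StrongDual ℝ X) 1 ∩ V, ε < dist a b := by
      by_contra h
      push_neg at h
      exact absurd (Metric.diam_le_of_forall_dist_le ε0.le h) (not_le.mpr hdiam)
    obtain ⟨a, ⟨ha1, ha2⟩, b, ⟨hb1, hb2⟩, hab⟩ := h2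
    rw [Metric.mem_closedBall, dist_zero_right] at ha1 hb1
    have haV : ∀ k ≤ n, |a (xs k) - x (xs k)| < 1 / (n + 1) := by
      intro k hk
      have := ha2
      simp only [hVdef, hW, Set.mem_preimage, Set.mem_iInter, Set.mem_setOf_eq] at this
      simpa using this k (Finset.mem_range.mpr (Nat.lt_succ_of_le hk))
    have hbV : ∀ k ≤ n, |b (xs k) - x (xs k)| < 1 / (n + 1) := by
      intro k hk
      have := hb2
      simp only [hVdef, hW, Set.mem_preimage, Set.mem_iInter, Set.mem_setOf_eq] at this
      simpa using this k (Finset.mem_range.mpr (Nat.lt_succ_of_le hk))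
    have htri : ε < ‖a - x‖ + ‖b - x‖ := by
      have : dist a b ≤ ‖a - x‖ + ‖b - x‖ := by
        rw [dist_eq_norm]
        calc ‖a - b‖ = ‖(a - x) - (b - x)‖ := by rw [sub_sub_sub_cancel_right]
        _ ≤ ‖a - x‖ + ‖b - x‖ := norm_sub_le _ _
      linarith
    rcases le_or_gt (ε / 2) ‖a - x‖ with hc | hc
    · exact ⟨a, ha1, hc, haV⟩
    · refine ⟨b, hb1, by linarith, hbV⟩
  choose w hw1 hw2 hw3 using key
  set u : ℕ → StrongDual ℝ X := fun n => w n - x with hu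
  have hub : ∀ n, ‖u n‖ ≤ 1 + ‖x‖ := fun n =>
    (norm_sub_le _ _).trans (by linarith [hw1 n])
  -- Step 2: u is weak*-null.
  have hnull : WeakStarNull u := by
    unfold WeakStarNull
    rw [tendsto_iff_forall_eval_tendsto_topDualPairing]
    intro v
    show Tendsto (fun i => (u i) v) atTop (𝓝 (0 : ℝ))
    rw [NormedAddCommGroup.tendsto_nhds_zero]
    intro δ hδ
    have hC : (0 : ℝ) < 1 + ‖x‖ := by positivity
    obtain ⟨k, hk⟩ := hxs.exists_dist_lt v (show (0:ℝ) < δ / (2 * (1 + ‖x‖)) by positivity)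
    have h1n : Filter.Tendsto (fun n : ℕ => 1 / ((n : ℝ) + 1)) atTop (nhds 0) :=
      tendsto_one_div_add_atTop_nhds_zero_nat
    filter_upwards [Filter.eventually_ge_atTop k,
      h1n.eventually (gt_mem_nhds (half_pos hδ))] with n hn1 hn2
    have hsplit : (u n) v = (u n) (xs k) + (u n) (v - xs k) := by
      rw [map_sub]; ring
    have h1 : |(u n) (xs k)| < δ / 2 := by
      have := hw3 n k hn1
      have heq : (u n) (xs k) = w n (xs k) - x (xs k) := by
        simp [hu]
      rw [heq]
      exact lt_trans this hn2
    have h2 : |(u n) (v - xs k)| ≤ (1 + ‖x‖) * ‖v - xs k‖ := by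
      calc |(u n) (v - xs k)| ≤ ‖u n‖ * ‖v - xs k‖ := (u n).le_opNorm _
      _ ≤ (1 + ‖x‖) * ‖v - xs k‖ :=
        mul_le_mul_of_nonneg_right (hub n) (norm_nonneg _)
    have h3 : ‖v - xs k‖ < δ / (2 * (1 + ‖x‖)) := by
      rwa [← dist_eq_norm]
    have h4 : (1 + ‖x‖) * ‖v - xs k‖ < δ / 2 := by
      have := mul_lt_mul_of_pos_left h3 hC
      calc (1 + ‖x‖) * ‖v - xs k‖ < (1 + ‖x‖) * (δ / (2 * (1 + ‖x‖))) := this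
      _ = δ / 2 := by field_simp
    calc ‖(u n) v‖ = |(u n) (xs k) + (u n) (v - xs k)| := by rw [hsplit]; rfl
    _ ≤ |(u n) (xs k)| + |(u n) (v - xs k)| := abs_add_le _ _
    _ < δ / 2 + δ / 2 := by linarith
    _ = δ := by ring
  -- Step 3: apply (m_q*).
  have heq := hmq x u hnull
  set L := Filter.limsup (fun n => ‖u n‖) Filter.atTop with hL
  have hLlb : ε / 2 ≤ L :=
    Filter.le_limsup_of_frequently_le (Filter.Frequently.of_forall fun n => hw2 n)
      (Filter.isBoundedUnder_of ⟨1 + ‖x‖, hub⟩)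
  have hL0 : 0 ≤ L := le_trans (by linarith) hLlb
  have hsum : limsup (fun n => ‖x + u n‖) atTop ≤ 1 := by
    apply Filter.limsup_le_of_le
    · exact Filter.isCoboundedUnder_le_of_eventually_le _
        (Filter.Eventually.of_forall fun n => norm_nonneg _)
    · apply Filter.Eventually.of_forall
      intro n
      have : x + u n = w n := by simp [hu]
      rw [this]
      exact hw1 n
  rw [heq] at hsum
  -- Step 4: algebra with rpow.
  have hA0 : (0 : ℝ) ≤ ‖x‖ ^ q + L ^ q := by positivity
  have hA1 : ‖x‖ ^ q + L ^ q ≤ 1 := by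
    have h := Real.rpow_le_rpow (Real.rpow_nonneg hA0 _) hsum hq0.le
    rwa [← Real.rpow_mul hA0, one_div_mul_cancel hq0.ne', Real.rpow_one,
      Real.one_rpow] at h
    
  have hεL : (ε / 2) ^ q ≤ L ^ q := Real.rpow_le_rpow (by positivity) hLlb hq0.le
  have hxq : ‖x‖ ^ q ≤ 1 - (ε / 2) ^ q := by linarith
  have := Real.rpow_le_rpow (Real.rpow_nonneg (norm_nonneg x) q) hxq
    (by positivity : (0:ℝ) ≤ 1 / q)
  rwa [← Real.rpow_mul (norm_nonneg x), mul_one_div_cancel hq0.ne',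
    Real.rpow_one] at this
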